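/- Let {z_s}_{s=1}^t be non-negative reals, σ > 0, β > 0, and let g : ℝ_+ → [0,1] be non-increasing with g(u) ≤ C₁ exp(−u²/2) for all u ≥ 0, for some constant C₁ > 0. Define w_s = g(z_s/σ) and w̃_s = w_s / (β + Σ_{s'=1}^t w_{s'}). Then Σ_{s=1}^t w̃_s z_s ≤ 2σ (1 + sqrt(log(C₁ t/β + e))). -/

import Mathlib

open Finset

/-- Kernel bias lemma: the normalized kernel-weighted average of the distances is
bounded by `2σ(1 + sqrt(log(C₁ t/β + e)))`. -/
theorem kernel_weighted_bias_bound
    (t : ℕ) (ht : 1 ≤ t) (z : Fin t → ℝ) (hz : ∀ s, 0 ≤ z s)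
    (σ β C₁ : ℝ) (hσ : 0 < σ) (hβ : 0 < β) (hC : 0 < C₁)
    (g : ℝ → ℝ)
    (hg01 : ∀ u, 0 ≤ u → g u ∈ Set.Icc (0 : ℝ) 1)
    (hmono : ∀ u v, 0 ≤ u → u ≤ v → g v ≤ g u)
    (hgauss : ∀ u, 0 ≤ u → g u ≤ C₁ * Real.exp (-u ^ 2 / 2)) :
    ∑ s, (g (z s / σ) / (β + ∑ s', g (z s' / σ))) * z s ≤
      2 * σ * (1 + Real.sqrt (Real.log (C₁ * t / β + Real.exp 1))) := by
  set L := Real.log (C₁ * t / β + Real.exp 1) with hLdef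
  have htR : (1 : ℝ) ≤ t := by exact_mod_cast ht
  have harg : 0 < C₁ * t / β + Real.exp 1 := by positivity
  have hexpL : Real.exp L = C₁ * t / β + Real.exp 1 := Real.exp_log harg
  have hL0 : 0 ≤ L := by
    rw [hLdef]
    apply Real.log_nonneg
    have h1 : (1 : ℝ) ≤ Real.exp 1 := by
      have := Real.add_one_le_exp (1 : ℝ); linarith
    have h2 : 0 ≤ C₁ * t / β := by positivity
    linarith
  set τ := 2 * σ * Real.sqrt L with hτdef
  have hsqrtL : 0 ≤ Real.sqrt L := Real.sqrt_nonneg _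
  have hτ0 : 0 ≤ τ := by positivity
  set W := ∑ s', g (z s' / σ) with hWdef
  have hw0 : ∀ s : Fin t, 0 ≤ g (z s / σ) := fun s => (hg01 _ (div_nonneg (hz s) hσ.le)).1
  have hW0 : 0 ≤ W := Finset.sum_nonneg fun s _ => hw0 s
  have hD : 0 < β + W := by linarith
  have key : ∀ s : Fin t, (g (z s / σ) / (β + W)) * z s ≤
      (g (z s / σ) / (β + W)) * τ + σ * C₁ * Real.exp (-L) / β := by
    intro s
    have hpos2 : 0 ≤ σ * C₁ * Real.exp (-L) / β := by positivity
    rcases le_or_gt (z s) τ with h | h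
    · have h1 : (g (z s / σ) / (β + W)) * z s ≤ (g (z s / σ) / (β + W)) * τ :=
        mul_le_mul_of_nonneg_left h (div_nonneg (hw0 s) hD.le)
      linarith
    · set u := z s / σ with hudef
      have hu0 : 0 ≤ u := div_nonneg (hz s) hσ.le
      have hzs : z s = σ * u := by rw [hudef]; field_simp
      have hueq : 2 * Real.sqrt L ≤ u := by
        rw [hudef, le_div_iff₀ hσ]
        nlinarith
      have hsqL : Real.sqrt L ^ 2 = L := Real.sq_sqrt hL0
      have hu2 : 4 * L ≤ u ^ 2 := by nlinarith
      have hkey : u * Real.exp (-u ^ 2 / 2) ≤ Real.exp (-u ^ 2 / 4) := by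
        have h1 : u ≤ Real.exp (u ^ 2 / 4) := by
          have h2 := Real.add_one_le_exp (u ^ 2 / 4)
          nlinarith [sq_nonneg (u / 2 - 1)]
        calc u * Real.exp (-u ^ 2 / 2)
            ≤ Real.exp (u ^ 2 / 4) * Real.exp (-u ^ 2 / 2) :=
              mul_le_mul_of_nonneg_right h1 (Real.exp_pos _).le
          _ = Real.exp (-u ^ 2 / 4) := by rw [← Real.exp_add]; ring_nf
      have hexple : Real.exp (-u ^ 2 / 4) ≤ Real.exp (-L) :=
        Real.exp_le_exp.mpr (by linarith)
      have hwz : g (z s / σ) * z s ≤ σ * C₁ * Real.exp (-L) := by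
        have h1 : g u ≤ C₁ * Real.exp (-u ^ 2 / 2) := hgauss u hu0
        have h2 : g u * z s ≤ C₁ * Real.exp (-u ^ 2 / 2) * z s :=
          mul_le_mul_of_nonneg_right h1 (hz s)
        calc g (z s / σ) * z s ≤ C₁ * Real.exp (-u ^ 2 / 2) * (σ * u) := by
              rw [← hzs]; exact h2
          _ = σ * C₁ * (u * Real.exp (-u ^ 2 / 2)) := by ring
          _ ≤ σ * C₁ * Real.exp (-u ^ 2 / 4) :=
              mul_le_mul_of_nonneg_left hkey (by positivity)
          _ ≤ σ * C₁ * Real.exp (-L) :=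
              mul_le_mul_of_nonneg_left hexple (by positivity)
      have hdiv : (g (z s / σ) / (β + W)) * z s ≤ g (z s / σ) * z s / β := by
        rw [div_mul_eq_mul_div]
        apply div_le_div_of_nonneg_left _ hβ (by linarith)
        · exact mul_nonneg (hw0 s) (hz s)
      have hdiv2 : g (z s / σ) * z s / β ≤ σ * C₁ * Real.exp (-L) / β := by
        gcongr
      have hτterm : 0 ≤ (g (z s / σ) / (β + W)) * τ := mul_nonneg (div_nonneg (hw0 s) hD.le) hτ0
      linarith
  calc ∑ s, (g (z s / σ) / (β + W)) * z s
      ≤ ∑ s : Fin t, ((g (z s / σ) / (β + W)) * τ + σ * C₁ * Real.exp (-L) / β) :=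
        Finset.sum_le_sum fun s _ => key s
    _ = (W / (β + W)) * τ + t * (σ * C₁ * Real.exp (-L) / β) := by
        rw [Finset.sum_add_distrib, Finset.sum_const, ← Finset.sum_mul,
          ← Finset.sum_div]
        simp [← hWdef, nsmul_eq_mul]
    _ ≤ τ + σ := by
        have h1 : W / (β + W) ≤ 1 := by
          rw [div_le_one hD]; linarith
        have h2 : (W / (β + W)) * τ ≤ τ := by
          nlinarith [div_nonneg hW0 hD.le]
        have h3 : (t : ℝ) * (σ * C₁ * Real.exp (-L) / β) ≤ σ := by
          have hA : C₁ * t / β ≤ Real.exp L := by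
            rw [hexpL]; have := Real.exp_pos (1 : ℝ); linarith
          have hAe : C₁ * t / β * Real.exp (-L) ≤ 1 := by
            rw [Real.exp_neg]
            rw [mul_inv_le_iff₀ (Real.exp_pos L)]
            simpa using hA
          have hEq : (t : ℝ) * (σ * C₁ * Real.exp (-L) / β)
              = σ * (C₁ * t / β * Real.exp (-L)) := by
            field_simp
          rw [hEq]
          nlinarith [Real.exp_pos (-L)]
        linarith
    _ ≤ 2 * σ * (1 + Real.sqrt L) := by
        have hrw : 2 * σ * (1 + Real.sqrt L) = σ + 2 * σ * Real.sqrt L + σ := by ring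
        rw [hrw, ← hτdef]
        linarith
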